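/- arXiv:2409.11025 — 4 statements merged into one kernel-verified Lean document; each statement's English description precedes it below -/
import Mathlib

section
/- Let f(x,y,z) = a₁₁x² + a₂₂y² + a₃₃z² + 2a₂₃yz + 2a₁₃xz + 2a₁₂xy be a ternary quadratic form with integer coefficients, A its symmetric coefficient matrix, and Ω the gcd of the six cofactors A₁₁, A₂₂, A₃₃, A₂₃, A₁₃, A₁₂ of A. Then Ω² divides det(A). -/
private lemma aux_gcd_step (c d a b : ℤ) (h1 : c ∣ d * a) (h2 : c ∣ d * b) :
    c ∣ d * (Int.gcd a b : ℤ) := by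
  have h := Int.dvd_coe_gcd h1 h2
  rw [Int.gcd_mul_left] at h
  push_cast at h
  rcases abs_choice d with he | he
  · rwa [he] at h
  · rw [he, neg_mul] at h
    exact dvd_neg.mp h

/-- For a primitive nondegenerate symmetric 3×3 integer matrix `A` (a ternary
quadratic form), the square of the gcd `Ω` of the six cofactors divides `det A`. -/
theorem stmt_0 (A : Matrix (Fin 3) (Fin 3) ℤ) (hsymm : A.IsSymm)
    (hprim : Int.gcd (Int.gcd (Int.gcd (Int.gcd (Int.gcd (A 0 0) (A 1 1)) (A 2 2))
      (A 1 2)) (A 0 2)) (A 0 1) = 1)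
    (hdet : A.det ≠ 0)
    (Ω : ℕ)
    (hΩ : Ω = Int.gcd (Int.gcd (Int.gcd (Int.gcd (Int.gcd (A.adjugate 0 0) (A.adjugate 1 1))
      (A.adjugate 2 2)) (A.adjugate 1 2)) (A.adjugate 0 2)) (A.adjugate 0 1)) :
    (Ω : ℤ) ^ 2 ∣ A.det := by
  set B := A.adjugate with hB
  have hBsymm : B.IsSymm := by
    unfold Matrix.IsSymm
    rw [hB, Matrix.adjugate_transpose, hsymm]
  -- Ω divides all entries of B
  have d5 : (Ω : ℤ) ∣ (Int.gcd (Int.gcd (Int.gcd (Int.gcd (B 0 0) (B 1 1)) (B 2 2))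
      (B 1 2)) (B 0 2) : ℤ) := by rw [hΩ]; exact Int.gcd_dvd_left _ _
  have d4 : (Ω : ℤ) ∣ (Int.gcd (Int.gcd (Int.gcd (B 0 0) (B 1 1)) (B 2 2)) (B 1 2) : ℤ) :=
    dvd_trans d5 (Int.gcd_dvd_left _ _)
  have d3 : (Ω : ℤ) ∣ (Int.gcd (Int.gcd (B 0 0) (B 1 1)) (B 2 2) : ℤ) :=
    dvd_trans d4 (Int.gcd_dvd_left _ _)
  have d2 : (Ω : ℤ) ∣ (Int.gcd (B 0 0) (B 1 1) : ℤ) :=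
    dvd_trans d3 (Int.gcd_dvd_left _ _)
  have h00 : (Ω : ℤ) ∣ B 0 0 := dvd_trans d2 (Int.gcd_dvd_left _ _)
  have h11 : (Ω : ℤ) ∣ B 1 1 := dvd_trans d2 (Int.gcd_dvd_right _ _)
  have h22 : (Ω : ℤ) ∣ B 2 2 := dvd_trans d3 (Int.gcd_dvd_right _ _)
  have h12 : (Ω : ℤ) ∣ B 1 2 := dvd_trans d4 (Int.gcd_dvd_right _ _)
  have h02 : (Ω : ℤ) ∣ B 0 2 := dvd_trans d5 (Int.gcd_dvd_right _ _)
  have h01 : (Ω : ℤ) ∣ B 0 1 := by rw [hΩ]; exact Int.gcd_dvd_right _ _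
  have e10 : B 1 0 = B 0 1 := congrFun (congrFun hBsymm 0) 1
  have e20 : B 2 0 = B 0 2 := congrFun (congrFun hBsymm 0) 2
  have e21 : B 2 1 = B 1 2 := congrFun (congrFun hBsymm 1) 2
  have h10 : (Ω : ℤ) ∣ B 1 0 := e10 ▸ h01
  have h20 : (Ω : ℤ) ∣ B 2 0 := e20 ▸ h02
  have h21 : (Ω : ℤ) ∣ B 2 1 := e21 ▸ h12
  -- adjugate of adjugate
  have key : B.adjugate = A.det • A := by
    have h := Matrix.adjugate_adjugate A (by simp : Fintype.card (Fin 3) ≠ 1)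
    simpa using h
  have entry : ∀ i j, B.adjugate i j = A.det * A i j := by
    intro i j
    rw [key]; simp
  have adjB := Matrix.adjugate_fin_three B
  have sqmul : ∀ x y : ℤ, (Ω : ℤ) ∣ x → (Ω : ℤ) ∣ y → (Ω : ℤ)^2 ∣ x * y := by
    intro x y hx hy
    rw [sq]
    exact mul_dvd_mul hx hy
  have c00 : (Ω : ℤ)^2 ∣ A.det * A 0 0 := by
    rw [← entry 0 0, adjB]
    simpa using dvd_sub (sqmul _ _ h11 h22) (sqmul _ _ h12 h21)
  have c11 : (Ω : ℤ)^2 ∣ A.det * A 1 1 := by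
    rw [← entry 1 1, adjB]
    simpa using dvd_sub (sqmul _ _ h00 h22) (sqmul _ _ h02 h20)
  have c22 : (Ω : ℤ)^2 ∣ A.det * A 2 2 := by
    rw [← entry 2 2, adjB]
    simpa using dvd_sub (sqmul _ _ h00 h11) (sqmul _ _ h01 h10)
  have c12 : (Ω : ℤ)^2 ∣ A.det * A 1 2 := by
    rw [← entry 1 2, adjB]
    simpa using dvd_add (dvd_neg.mpr (sqmul _ _ h00 h12)) (sqmul _ _ h02 h10)
  have c02 : (Ω : ℤ)^2 ∣ A.det * A 0 2 := by
    rw [← entry 0 2, adjB]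
    simpa using dvd_sub (sqmul _ _ h01 h12) (sqmul _ _ h02 h11)
  have c01 : (Ω : ℤ)^2 ∣ A.det * A 0 1 := by
    rw [← entry 0 1, adjB]
    simpa using dvd_add (dvd_neg.mpr (sqmul _ _ h01 h22)) (sqmul _ _ h02 h21)
  have final := aux_gcd_step _ _ _ _
    (aux_gcd_step _ _ _ _
      (aux_gcd_step _ _ _ _
        (aux_gcd_step _ _ _ _
          (aux_gcd_step _ _ _ _ c00 c11) c22) c12) c02) c01
  rwa [hprim, Nat.cast_one, mul_one] at final
end

section
/- Let ℓ be an odd prime, and ρ(x,z) = ax² + txz + bz² a binary quadratic form over ℤ with discriminant D = t² − 4ab, with ℓ ∤ aD. Then the number of h ∈ {0, …, ℓ−1} ∪ {∞} (where the value at ∞ is a and at h is ah² + th + b) for which −ρ_h is a nonzero quadratic residue mod ℓ equals (ℓ − (D/ℓ))/2, where (D/ℓ) is the Legendre symbol. -/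
open Finset

section aux

variable {F : Type*} [Field F] [Fintype F] [DecidableEq F]

private lemma aux_shift_sum (hF : ringChar F ≠ 2) (D : F) :
    ∑ c : F, quadraticChar F (c - D) = 0 := by
  rw [← quadraticChar_sum_zero hF]
  exact Fintype.sum_equiv (Equiv.subRight D) _ _ (fun c => rfl)

private lemma aux_J (hF : ringChar F ≠ 2) {D : F} (hD : D ≠ 0) :
    ∑ c : F, quadraticChar F (c * (c - D)) = -1 := by
  have h0 : ∑ c : F, quadraticChar F (c * (c - D))
      = ∑ c ∈ univ \ {0}, quadraticChar F (c * (c - D)) := by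
    rw [Finset.sum_eq_sum_sdiff_singleton_add (Finset.mem_univ (0 : F))]
    simp
  rw [h0]
  have h1 : ∑ c ∈ univ \ {(0 : F)}, quadraticChar F (c * (c - D))
      = ∑ y ∈ univ \ {(1 : F)}, quadraticChar F y := by
    refine Finset.sum_nbij' (i := fun c => 1 - D * c⁻¹) (j := fun y => D * (1 - y)⁻¹)
      ?_ ?_ ?_ ?_ ?_
    · intro c hc
      rw [Finset.mem_sdiff, Finset.mem_singleton] at hc ⊢
      refine ⟨Finset.mem_univ _, ?_⟩
      have hc0 : c ≠ 0 := hc.2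
      intro hcontra
      have : D * c⁻¹ = 0 := by linear_combination -hcontra
      rcases mul_eq_zero.mp this with h | h
      · exact hD h
      · exact hc0 (inv_eq_zero.mp h)
    · intro y hy
      rw [Finset.mem_sdiff, Finset.mem_singleton] at hy ⊢
      refine ⟨Finset.mem_univ _, ?_⟩
      have hy1 : (1 : F) - y ≠ 0 := sub_ne_zero.mpr (Ne.symm hy.2)
      exact mul_ne_zero hD (inv_ne_zero hy1)
    · intro c hc
      rw [Finset.mem_sdiff, Finset.mem_singleton] at hc
      have hc0 : c ≠ 0 := hc.2
      field_simp
      rw [sub_sub_cancel, div_self hD]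
    · intro y hy
      rw [Finset.mem_sdiff, Finset.mem_singleton] at hy
      have hy1 : (1 : F) - y ≠ 0 := sub_ne_zero.mpr (Ne.symm hy.2)
      field_simp
      ring
    · intro c hc
      rw [Finset.mem_sdiff, Finset.mem_singleton] at hc
      have hc0 : c ≠ 0 := hc.2
      have hkey : c * (c - D) = c ^ 2 * (1 - D * c⁻¹) := by
        field_simp
      rw [hkey, map_mul, quadraticChar_sq_one' hc0, one_mul]
  rw [h1]
  have h2 : ∑ y : F, quadraticChar F y
      = ∑ y ∈ univ \ {(1 : F)}, quadraticChar F y + quadraticChar F 1 := by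
    rw [← Finset.sum_eq_sum_sdiff_singleton_add (Finset.mem_univ (1 : F))]
  have h3 := quadraticChar_sum_zero hF
  rw [h2, show quadraticChar F 1 = 1 from map_one _] at h3
  linarith

private lemma aux_sq_sum (hF : ringChar F ≠ 2) {D : F} (hD : D ≠ 0) :
    ∑ u : F, quadraticChar F (u ^ 2 - D) = -1 := by
  have fib : ∑ c : F, ∑ u ∈ univ.filter (fun u : F => u ^ 2 = c),
        quadraticChar F (u ^ 2 - D) = ∑ u : F, quadraticChar F (u ^ 2 - D) :=
    Finset.sum_fiberwise_of_maps_to (fun i _ => Finset.mem_univ _) _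
  rw [← fib]
  have inner : ∀ c : F, ∑ u ∈ univ.filter (fun u : F => u ^ 2 = c),
      quadraticChar F (u ^ 2 - D)
      = (quadraticChar F c + 1) * quadraticChar F (c - D) := by
    intro c
    have : ∑ u ∈ univ.filter (fun u : F => u ^ 2 = c), quadraticChar F (u ^ 2 - D)
        = ∑ _u ∈ univ.filter (fun u : F => u ^ 2 = c), quadraticChar F (c - D) := by
      refine Finset.sum_congr rfl fun u hu => ?_
      rw [Finset.mem_filter] at hu
      rw [hu.2]
    rw [this, Finset.sum_const, nsmul_eq_mul]
    congr 1
    have := quadraticChar_card_sqrts hF c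
    rw [← this]
    congr 1
    simp [Set.toFinset_setOf]
  simp_rw [inner, add_mul, one_mul]
  rw [Finset.sum_add_distrib, aux_shift_sum hF D]
  have : ∑ c : F, quadraticChar F c * quadraticChar F (c - D)
      = ∑ c : F, quadraticChar F (c * (c - D)) := by
    refine Finset.sum_congr rfl fun c _ => (map_mul _ _ _).symm
  rw [this, aux_J hF hD]
  ring

private lemma aux_S (hF : ringChar F ≠ 2) {A T B : F} (hA : A ≠ 0)
    (hD : T ^ 2 - 4 * A * B ≠ 0) :
    ∑ x : F, quadraticChar F (A * x ^ 2 + T * x + B) = - quadraticChar F A := by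
  have h2 : (2 : F) ≠ 0 := Ring.two_ne_zero hF
  have h2A : 2 * A ≠ 0 := mul_ne_zero h2 hA
  have key : ∀ x : F, quadraticChar F A * quadraticChar F (A * x ^ 2 + T * x + B)
      = quadraticChar F ((2 * A * x + T) ^ 2 - (T ^ 2 - 4 * A * B)) := by
    intro x
    have he : (2 * A * x + T) ^ 2 - (T ^ 2 - 4 * A * B)
        = (2 : F) ^ 2 * (A * (A * x ^ 2 + T * x + B)) := by ring
    rw [he, map_mul, quadraticChar_sq_one' h2, one_mul, map_mul]
  have hsum : ∑ x : F, quadraticChar F ((2 * A * x + T) ^ 2 - (T ^ 2 - 4 * A * B))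
      = ∑ u : F, quadraticChar F (u ^ 2 - (T ^ 2 - 4 * A * B)) := by
    refine Fintype.sum_equiv ((Equiv.mulLeft₀ (2 * A) h2A).trans (Equiv.addRight T)) _ _
      (fun x => ?_)
    simp [Equiv.mulLeft₀, mul_comm]
  have hS : quadraticChar F A * ∑ x : F, quadraticChar F (A * x ^ 2 + T * x + B) = -1 := by
    rw [Finset.mul_sum]
    simp_rw [key]
    rw [hsum, aux_sq_sum hF hD]
  have hA2 : quadraticChar F A * quadraticChar F A = 1 := by
    have := quadraticChar_sq_one hA
    rwa [sq] at this
  calc ∑ x : F, quadraticChar F (A * x ^ 2 + T * x + B)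
      = quadraticChar F A * quadraticChar F A
        * ∑ x : F, quadraticChar F (A * x ^ 2 + T * x + B) := by rw [hA2, one_mul]
    _ = quadraticChar F A * (-1) := by rw [mul_assoc, hS]
    _ = - quadraticChar F A := by ring

private lemma aux_roots (hF : ringChar F ≠ 2) {A T B : F} (hA : A ≠ 0) :
    (((univ.filter fun x : F => A * x ^ 2 + T * x + B = 0).card : ℤ))
      = quadraticChar F (T ^ 2 - 4 * A * B) + 1 := by
  have h2 : (2 : F) ≠ 0 := Ring.two_ne_zero hF
  have h2A : 2 * A ≠ 0 := mul_ne_zero h2 hA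
  have hcard : (univ.filter fun x : F => A * x ^ 2 + T * x + B = 0).card
      = (univ.filter fun u : F => u ^ 2 = T ^ 2 - 4 * A * B).card := by
    refine Finset.card_bij' (fun x _ => 2 * A * x + T) (fun u _ => (u - T) / (2 * A))
      ?_ ?_ ?_ ?_
    · intro x hx
      rw [Finset.mem_filter] at hx ⊢
      refine ⟨Finset.mem_univ _, ?_⟩
      have hx2 := hx.2
      have : (2 * A * x + T) ^ 2
          = (T ^ 2 - 4 * A * B) + (2 : F) ^ 2 * A * (A * x ^ 2 + T * x + B) := by ring
      rw [this, hx2]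
      ring
    · intro u hu
      rw [Finset.mem_filter] at hu ⊢
      refine ⟨Finset.mem_univ _, ?_⟩
      have hu2 := hu.2
      have h4A2 : (2 : F) ^ 2 * A ≠ 0 := mul_ne_zero (pow_ne_zero 2 h2) hA
      have hexp : A * ((u - T) / (2 * A)) ^ 2 + T * ((u - T) / (2 * A)) + B
          = (u ^ 2 - (T ^ 2 - 4 * A * B)) / ((2 : F) ^ 2 * A) := by
        field_simp
        ring
      rw [hexp, hu2]
      simp
    · intro x _
      field_simp
      ring
    · intro u _
      field_simp
      ring
  rw [hcard]
  have := quadraticChar_card_sqrts hF (T ^ 2 - 4 * A * B)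
  rw [← this]
  congr 1
  simp [Set.toFinset_setOf]

private lemma aux_count (hF : ringChar F ≠ 2) {A T B : F} (hA : A ≠ 0)
    (hD : T ^ 2 - 4 * A * B ≠ 0) :
    2 * (((univ.filter fun x : F =>
        quadraticChar F (-(A * x ^ 2 + T * x + B)) = 1).card : ℤ))
      = (Fintype.card F : ℤ) - 1 - quadraticChar F (T ^ 2 - 4 * A * B)
        - quadraticChar F (-A) := by
  set g : F → ℤ := fun x => quadraticChar F (-(A * x ^ 2 + T * x + B)) with hg
  have hcard : (((univ.filter fun x : F => g x = 1).card : ℤ))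
      = ∑ x : F, (if g x = 1 then (1 : ℤ) else 0) := by
    rw [Finset.sum_boole]
  have hind : ∀ x : F, 2 * (if g x = 1 then (1 : ℤ) else 0) = g x ^ 2 + g x := by
    intro x
    show 2 * (if quadraticChar F (-(A * x ^ 2 + T * x + B)) = 1 then (1 : ℤ) else 0)
        = quadraticChar F (-(A * x ^ 2 + T * x + B)) ^ 2
          + quadraticChar F (-(A * x ^ 2 + T * x + B))
    rcases quadraticChar_isQuadratic F (-(A * x ^ 2 + T * x + B)) with hq | hq | hq <;>
      rw [hq] <;> norm_num
  have hsq : ∀ x : F, g x ^ 2 = 1 - (if A * x ^ 2 + T * x + B = 0 then (1 : ℤ) else 0) := by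
    intro x
    show quadraticChar F (-(A * x ^ 2 + T * x + B)) ^ 2
        = 1 - (if A * x ^ 2 + T * x + B = 0 then (1 : ℤ) else 0)
    by_cases hx : A * x ^ 2 + T * x + B = 0
    · rw [if_pos hx, hx, neg_zero, MulChar.map_zero]
      ring
    · rw [if_neg hx, quadraticChar_sq_one (neg_ne_zero.mpr hx)]
      ring
  have hsumg : ∑ x : F, g x = - quadraticChar F (-A) := by
    have hgx : ∀ x : F, g x = quadraticChar F (-1) * quadraticChar F (A * x ^ 2 + T * x + B) := by
      intro x
      show quadraticChar F (-(A * x ^ 2 + T * x + B)) = _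
      rw [show -(A * x ^ 2 + T * x + B) = (-1) * (A * x ^ 2 + T * x + B) by ring, map_mul]
    simp_rw [hgx]
    rw [← Finset.mul_sum, aux_S hF hA hD, mul_neg, ← map_mul, neg_one_mul]
  have hsumsq : ∑ x : F, g x ^ 2
      = (Fintype.card F : ℤ) - (quadraticChar F (T ^ 2 - 4 * A * B) + 1) := by
    simp_rw [hsq]
    rw [Finset.sum_sub_distrib, Finset.sum_const, Finset.sum_boole, aux_roots hF hA]
    simp [Finset.card_univ]
  calc 2 * (((univ.filter fun x : F => g x = 1).card : ℤ))
      = ∑ x : F, 2 * (if g x = 1 then (1 : ℤ) else 0) := by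
        rw [← Finset.mul_sum, hcard]
    _ = ∑ x : F, (g x ^ 2 + g x) := by simp_rw [hind]
    _ = (∑ x : F, g x ^ 2) + ∑ x : F, g x := Finset.sum_add_distrib
    _ = _ := by rw [hsumg, hsumsq]; ring

end aux

/-- Among the `ℓ+1` values `v_∞ = a` and `v_h = ah²+th+b` (`0 ≤ h ≤ ℓ−1`) of a binary
quadratic form of discriminant `D = t²−4ab` with `ℓ ∤ aD`, the number of those for which
`−v` is a nonzero quadratic residue mod `ℓ` equals `(ℓ − (D/ℓ))/2`. -/
theorem stmt_5 (ℓ : ℕ) [Fact ℓ.Prime] (hℓ : ℓ ≠ 2) (a t b : ℤ)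
    (h : ¬ (ℓ : ℤ) ∣ a * (t ^ 2 - 4 * a * b)) :
    (((Finset.range ℓ).filter
        (fun x : ℕ => legendreSym ℓ (-(a * (x : ℤ) ^ 2 + t * x + b)) = 1)).card : ℤ)
      + (if legendreSym ℓ (-a) = 1 then 1 else 0)
      = ((ℓ : ℤ) - legendreSym ℓ (t ^ 2 - 4 * a * b)) / 2 := by
  have hF : ringChar (ZMod ℓ) ≠ 2 := by
    rw [ZMod.ringChar_zmod_n]; exact hℓ
  set A : ZMod ℓ := (a : ZMod ℓ) with hAdef
  set T : ZMod ℓ := (t : ZMod ℓ) with hTdef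
  set B : ZMod ℓ := (b : ZMod ℓ) with hBdef
  have hda : ¬ (ℓ : ℤ) ∣ a := fun hd => h (hd.mul_right _)
  have hdD : ¬ (ℓ : ℤ) ∣ (t ^ 2 - 4 * a * b) := fun hd => h (hd.mul_left _)
  have hA : A ≠ 0 := by
    rw [hAdef, Ne, ZMod.intCast_zmod_eq_zero_iff_dvd]
    exact_mod_cast hda
  have hDcast : ((t ^ 2 - 4 * a * b : ℤ) : ZMod ℓ) = T ^ 2 - 4 * A * B := by
    rw [hAdef, hBdef, hTdef]; push_cast; ring
  have hD : T ^ 2 - 4 * A * B ≠ 0 := by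
    rw [← hDcast, Ne, ZMod.intCast_zmod_eq_zero_iff_dvd]
    exact_mod_cast hdD
  have hleg : ∀ n : ℤ, legendreSym ℓ n = quadraticChar (ZMod ℓ) (n : ZMod ℓ) := fun n => rfl
  have hcards : ((Finset.range ℓ).filter
        (fun x : ℕ => legendreSym ℓ (-(a * (x : ℤ) ^ 2 + t * x + b)) = 1)).card
      = (univ.filter fun x : ZMod ℓ =>
          quadraticChar (ZMod ℓ) (-(A * x ^ 2 + T * x + B)) = 1).card := by
    have hne : NeZero ℓ := ⟨(Fact.out : ℓ.Prime).ne_zero⟩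
    refine Finset.card_bij' (fun x _ => (x : ZMod ℓ)) (fun v _ => v.val) ?_ ?_ ?_ ?_
    · intro x hx
      rw [Finset.mem_filter] at hx ⊢
      refine ⟨Finset.mem_univ _, ?_⟩
      have hx2 := hx.2
      rw [hleg] at hx2
      have hc : ((-(a * (x : ℤ) ^ 2 + t * (x : ℤ) + b) : ℤ) : ZMod ℓ)
          = -(A * (x : ZMod ℓ) ^ 2 + T * (x : ZMod ℓ) + B) := by
        rw [hAdef, hBdef, hTdef]; push_cast; ring
      rwa [hc] at hx2
    · intro v hv
      rw [Finset.mem_filter] at hv ⊢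
      refine ⟨Finset.mem_range.mpr (ZMod.val_lt v), ?_⟩
      rw [hleg]
      have hc : ((-(a * ((v.val : ℕ) : ℤ) ^ 2 + t * ((v.val : ℕ) : ℤ) + b) : ℤ) : ZMod ℓ)
          = -(A * v ^ 2 + T * v + B) := by
        rw [hAdef, hBdef, hTdef]
        push_cast [ZMod.natCast_val, ZMod.cast_id]
        ring
      rw [hc]
      exact hv.2
    · intro x hx
      rw [Finset.mem_filter, Finset.mem_range] at hx
      exact ZMod.val_cast_of_lt hx.1
    · intro v _
      exact ZMod.natCast_rightInverse v
  have hcount := aux_count hF hA hD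
  rw [ZMod.card ℓ] at hcount
  rw [hcards]
  have hlegD : legendreSym ℓ (t ^ 2 - 4 * a * b) = quadraticChar (ZMod ℓ) (T ^ 2 - 4 * A * B) := by
    rw [hleg, hDcast]
  have hlegA : legendreSym ℓ (-a) = quadraticChar (ZMod ℓ) (-A) := by
    rw [hleg]
    congr 1
    rw [hAdef]
    push_cast
    ring
  rw [hlegD, hlegA]
  have hnA : -A ≠ 0 := neg_ne_zero.mpr hA
  have hdich := quadraticChar_dichotomy hnA
  have hdichD : quadraticChar (ZMod ℓ) (T ^ 2 - 4 * A * B) = 1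
      ∨ quadraticChar (ZMod ℓ) (T ^ 2 - 4 * A * B) = -1 := quadraticChar_dichotomy hD
  set C : ℤ := ((univ.filter fun x : ZMod ℓ =>
      quadraticChar (ZMod ℓ) (-(A * x ^ 2 + T * x + B)) = 1).card : ℤ)
  set d : ℤ := quadraticChar (ZMod ℓ) (T ^ 2 - 4 * A * B)
  set e : ℤ := quadraticChar (ZMod ℓ) (-A)
  have hodd : ℓ % 2 = 1 := Nat.odd_iff.mp ((Fact.out : ℓ.Prime).odd_of_ne_two hℓ)
  rcases hdich with he | he <;> rcases hdichD with hd' | hd' <;>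
    rw [he, hd'] at hcount ⊢ <;> split_ifs <;> first | omega | exact absurd rfl ‹¬(-1 : ℤ) = 1›.elim | exact ‹False›.elim
end

section
/- Let B be a quaternion algebra over ℚ with basis 1, α, β, αβ where α² = −cp, β² = −q, βα = −αβ, for primes p, q, c with q odd and r an integer satisfying r² + cp ≡ 0 (mod q). Then the ℤ-lattice O = ℤ + ℤ(1+β)/2 + ℤ α(1+β)/2 + ℤ (r+α)β/q, with q ≡ 3 (mod 8), is closed under multiplication, i.e., is an order in B. -/
open Quaternion

private lemma quatO_mul_22 (cp q' : ℚ) (t m r : ℤ) (hq0 : q' ≠ 0)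
    (hq : q' = 8*(t:ℚ)+3) (hcp : cp = q'*(m:ℚ) - (r:ℚ)^2) :
    ((2:ℚ)⁻¹ • (1 + (⟨0,0,1,0⟩ : ℍ[ℚ,-cp,-q']))) * ((2:ℚ)⁻¹ • (1 + (⟨0,0,1,0⟩ : ℍ[ℚ,-cp,-q']))) = ((-(2*t+1) : ℤ)) • (1 : ℍ[ℚ,-cp,-q']) + ((2:ℚ)⁻¹ • (1 + (⟨0,0,1,0⟩ : ℍ[ℚ,-cp,-q']))) := by
  subst hcp; subst hq
  simp only [← Int.cast_smul_eq_zsmul ℚ]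
  ext <;> simp <;> field_simp <;> ring

private lemma quatO_mul_23 (cp q' : ℚ) (t m r : ℤ) (hq0 : q' ≠ 0)
    (hq : q' = 8*(t:ℚ)+3) (hcp : cp = q'*(m:ℚ) - (r:ℚ)^2) :
    ((2:ℚ)⁻¹ • (1 + (⟨0,0,1,0⟩ : ℍ[ℚ,-cp,-q']))) * ((2:ℚ)⁻¹ • ((⟨0,1,0,0⟩ : ℍ[ℚ,-cp,-q']) * (1 + ⟨0,0,1,0⟩))) = ((-((2*t+1)*r) : ℤ)) • (1 : ℍ[ℚ,-cp,-q']) + (((2*t+1)*2*r : ℤ)) • ((2:ℚ)⁻¹ • (1 + (⟨0,0,1,0⟩ : ℍ[ℚ,-cp,-q']))) + ((2*(2*t+1) : ℤ)) • ((2:ℚ)⁻¹ • ((⟨0,1,0,0⟩ : ℍ[ℚ,-cp,-q']) * (1 + ⟨0,0,1,0⟩))) + ((-((2*t+1)*(8*t+3)) : ℤ)) • ((q' : ℚ)⁻¹ • (((r:ℚ) • 1 + (⟨0,1,0,0⟩ : ℍ[ℚ,-cp,-q'])) * ⟨0,0,1,0⟩)) := by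
  subst hcp; subst hq
  simp only [← Int.cast_smul_eq_zsmul ℚ]
  have hq0' : (3 + (t:ℚ)*8) ≠ 0 := by rw [add_comm, mul_comm]; exact hq0
  ext <;> simp <;> field_simp <;> ring_nf <;> field_simp <;> ring

private lemma quatO_mul_32 (cp q' : ℚ) (t m r : ℤ) (hq0 : q' ≠ 0)
    (hq : q' = 8*(t:ℚ)+3) (hcp : cp = q'*(m:ℚ) - (r:ℚ)^2) :
    ((2:ℚ)⁻¹ • ((⟨0,1,0,0⟩ : ℍ[ℚ,-cp,-q']) * (1 + ⟨0,0,1,0⟩))) * ((2:ℚ)⁻¹ • (1 + (⟨0,0,1,0⟩ : ℍ[ℚ,-cp,-q']))) = (((2*t+1)*r : ℤ)) • (1 : ℍ[ℚ,-cp,-q']) + ((-((2*t+1)*2*r) : ℤ)) • ((2:ℚ)⁻¹ • (1 + (⟨0,0,1,0⟩ : ℍ[ℚ,-cp,-q']))) + ((1-2*(2*t+1) : ℤ)) • ((2:ℚ)⁻¹ • ((⟨0,1,0,0⟩ : ℍ[ℚ,-cp,-q']) * (1 + ⟨0,0,1,0⟩))) + (((2*t+1)*(8*t+3) : ℤ))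 • ((q' : ℚ)⁻¹ • (((r:ℚ) • 1 + (⟨0,1,0,0⟩ : ℍ[ℚ,-cp,-q'])) * ⟨0,0,1,0⟩)) := by
  subst hcp; subst hq
  simp only [← Int.cast_smul_eq_zsmul ℚ]
  have hq0' : (3 + (t:ℚ)*8) ≠ 0 := by rw [add_comm, mul_comm]; exact hq0
  ext <;> simp <;> field_simp <;> ring_nf <;> field_simp <;> ring

private lemma quatO_mul_33 (cp q' : ℚ) (t m r : ℤ) (hq0 : q' ≠ 0)
    (hq : q' = 8*(t:ℚ)+3) (hcp : cp = q'*(m:ℚ) - (r:ℚ)^2) :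
    ((2:ℚ)⁻¹ • ((⟨0,1,0,0⟩ : ℍ[ℚ,-cp,-q']) * (1 + ⟨0,0,1,0⟩))) * ((2:ℚ)⁻¹ • ((⟨0,1,0,0⟩ : ℍ[ℚ,-cp,-q']) * (1 + ⟨0,0,1,0⟩))) = (((r^2-(8*t+3)*m)*(2*t+1) : ℤ)) • (1 : ℍ[ℚ,-cp,-q']) := by
  subst hcp; subst hq
  simp only [← Int.cast_smul_eq_zsmul ℚ]
  ext <;> simp <;> field_simp <;> ring

private lemma quatO_mul_24 (cp q' : ℚ) (t m r : ℤ) (hq0 : q' ≠ 0)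
    (hq : q' = 8*(t:ℚ)+3) (hcp : cp = q'*(m:ℚ) - (r:ℚ)^2) :
    ((2:ℚ)⁻¹ • (1 + (⟨0,0,1,0⟩ : ℍ[ℚ,-cp,-q']))) * ((q' : ℚ)⁻¹ • (((r:ℚ) • 1 + (⟨0,1,0,0⟩ : ℍ[ℚ,-cp,-q'])) * ⟨0,0,1,0⟩)) = ((-r : ℤ)) • (1 : ℍ[ℚ,-cp,-q']) + ((r : ℤ)) • ((2:ℚ)⁻¹ • (1 + (⟨0,0,1,0⟩ : ℍ[ℚ,-cp,-q']))) + ((1 : ℤ)) • ((2:ℚ)⁻¹ • ((⟨0,1,0,0⟩ : ℍ[ℚ,-cp,-q']) * (1 + ⟨0,0,1,0⟩))) + ((-(4*t+1) : ℤ)) • ((q' : ℚ)⁻¹ • (((r:ℚ) • 1 + (⟨0,1,0,0⟩ : ℍ[ℚ,-cp,-q'])) * ⟨0,0,1,0⟩)) := by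
  subst hcp; subst hq
  simp only [← Int.cast_smul_eq_zsmul ℚ]
  ext <;> simp <;> field_simp <;> ring

private lemma quatO_mul_42 (cp q' : ℚ) (t m r : ℤ) (hq0 : q' ≠ 0)
    (hq : q' = 8*(t:ℚ)+3) (hcp : cp = q'*(m:ℚ) - (r:ℚ)^2) :
    ((q' : ℚ)⁻¹ • (((r:ℚ) • 1 + (⟨0,1,0,0⟩ : ℍ[ℚ,-cp,-q'])) * ⟨0,0,1,0⟩)) * ((2:ℚ)⁻¹ • (1 + (⟨0,0,1,0⟩ : ℍ[ℚ,-cp,-q']))) = ((-r : ℤ)) • ((2:ℚ)⁻¹ • (1 + (⟨0,0,1,0⟩ : ℍ[ℚ,-cp,-q']))) + ((-1 : ℤ)) • ((2:ℚ)⁻¹ • ((⟨0,1,0,0⟩ : ℍ[ℚ,-cp,-q']) * (1 + ⟨0,0,1,0⟩))) + ((4*t+2 : ℤ)) • ((q' : ℚ)⁻¹ • (((r:ℚ) • 1 + (⟨0,1,0,0⟩ : ℍ[ℚ,-cp,-q'])) * ⟨0,0,1,0⟩)) := by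
  subst hcp; subst hq
  simp only [← Int.cast_smul_eq_zsmul ℚ]
  ext <;> simp <;> field_simp <;> ring

private lemma quatO_mul_34 (cp q' : ℚ) (t m r : ℤ) (hq0 : q' ≠ 0)
    (hq : q' = 8*(t:ℚ)+3) (hcp : cp = q'*(m:ℚ) - (r:ℚ)^2) :
    ((2:ℚ)⁻¹ • ((⟨0,1,0,0⟩ : ℍ[ℚ,-cp,-q']) * (1 + ⟨0,0,1,0⟩))) * ((q' : ℚ)⁻¹ • (((r:ℚ) • 1 + (⟨0,1,0,0⟩ : ℍ[ℚ,-cp,-q'])) * ⟨0,0,1,0⟩)) = ((r^2 - m*(4*t+1) : ℤ)) • (1 : ℍ[ℚ,-cp,-q']) + ((-(r^2+m) : ℤ)) • ((2:ℚ)⁻¹ • (1 + (⟨0,0,1,0⟩ : ℍ[ℚ,-cp,-q']))) + ((-r : ℤ)) • ((2:ℚ)⁻¹ • ((⟨0,1,0,0⟩ : ℍ[ℚ,-cp,-q']) * (1 + ⟨0,0,1,0⟩))) + ((r*(4*t+2) : ℤ)) • ((q' : ℚ)⁻¹ • (((r:ℚ) • 1 + (⟨0,1,0,0⟩ : ℍ[ℚ,-cp,-q']))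 * ⟨0,0,1,0⟩)) := by
  subst hcp; subst hq
  simp only [← Int.cast_smul_eq_zsmul ℚ]
  ext <;> simp <;> field_simp <;> ring

private lemma quatO_mul_43 (cp q' : ℚ) (t m r : ℤ) (hq0 : q' ≠ 0)
    (hq : q' = 8*(t:ℚ)+3) (hcp : cp = q'*(m:ℚ) - (r:ℚ)^2) :
    ((q' : ℚ)⁻¹ • (((r:ℚ) • 1 + (⟨0,1,0,0⟩ : ℍ[ℚ,-cp,-q'])) * ⟨0,0,1,0⟩)) * ((2:ℚ)⁻¹ • ((⟨0,1,0,0⟩ : ℍ[ℚ,-cp,-q']) * (1 + ⟨0,0,1,0⟩))) = ((-(m*(4*t+2)) : ℤ)) • (1 : ℍ[ℚ,-cp,-q']) + ((r^2+m : ℤ)) • ((2:ℚ)⁻¹ • (1 + (⟨0,0,1,0⟩ : ℍ[ℚ,-cp,-q']))) + ((r : ℤ)) • ((2:ℚ)⁻¹ • ((⟨0,1,0,0⟩ : ℍ[ℚ,-cp,-q']) * (1 + ⟨0,0,1,0⟩))) + ((-(r*(4*t+2)) : ℤ)) • ((q' : ℚ)⁻¹ • (((r:ℚ) • 1 + (⟨0,1,0,0⟩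 : ℍ[ℚ,-cp,-q'])) * ⟨0,0,1,0⟩)) := by
  subst hcp; subst hq
  simp only [← Int.cast_smul_eq_zsmul ℚ]
  ext <;> simp <;> field_simp <;> ring

private lemma quatO_mul_44 (cp q' : ℚ) (t m r : ℤ) (hq0 : q' ≠ 0)
    (hq : q' = 8*(t:ℚ)+3) (hcp : cp = q'*(m:ℚ) - (r:ℚ)^2) :
    ((q' : ℚ)⁻¹ • (((r:ℚ) • 1 + (⟨0,1,0,0⟩ : ℍ[ℚ,-cp,-q'])) * ⟨0,0,1,0⟩)) * ((q' : ℚ)⁻¹ • (((r:ℚ) • 1 + (⟨0,1,0,0⟩ : ℍ[ℚ,-cp,-q'])) * ⟨0,0,1,0⟩)) = ((-m : ℤ)) • (1 : ℍ[ℚ,-cp,-q']) := by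
  subst hcp; subst hq
  simp only [← Int.cast_smul_eq_zsmul ℚ]
  ext <;> simp <;> field_simp <;> ring

open Quaternion in
/-- The lattice `O = ℤ + ℤ(1+β)/2 + ℤ α(1+β)/2 + ℤ (r+α)β/q` in the quaternion algebra
`(−cp, −q / ℚ)` is closed under multiplication (is an order). -/
theorem stmt_12 (p c q : ℕ) (hp : p.Prime) (hc : c.Prime) (hq : q.Prime)
    (hq8 : q % 8 = 3) (r : ℤ) (hr : (q : ℤ) ∣ r ^ 2 + (c : ℤ) * p)
    (α β : ℍ[ℚ, -((c : ℚ) * p), -(q : ℚ)])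
    (hα : α = ⟨0, 1, 0, 0⟩) (hβ : β = ⟨0, 0, 1, 0⟩)
    (O : Submodule ℤ ℍ[ℚ, -((c : ℚ) * p), -(q : ℚ)])
    (hO : O = Submodule.span ℤ
      {1, (2 : ℚ)⁻¹ • (1 + β), (2 : ℚ)⁻¹ • (α * (1 + β)),
        (q : ℚ)⁻¹ • (((r : ℚ) • 1 + α) * β)}) :
    ∀ x ∈ O, ∀ y ∈ O, x * y ∈ O := by
  subst hα hβ
  obtain ⟨m, hm⟩ := hr
  obtain ⟨t, ht⟩ : ∃ t : ℤ, (q : ℤ) = 8*t+3 := ⟨((q:ℤ)-3)/8, by omega⟩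
  have hq0 : (q : ℚ) ≠ 0 := Nat.cast_ne_zero.mpr hq.pos.ne'
  have hq' : (q : ℚ) = 8*(t:ℚ)+3 := by exact_mod_cast ht
  have hcp' : (c : ℚ) * p = (q:ℚ)*(m:ℚ) - (r:ℚ)^2 := by
    have h : (r:ℚ)^2 + (c:ℚ)*p = (q:ℚ)*m := by exact_mod_cast hm
    linarith
  set S : Set ℍ[ℚ, -((c : ℚ) * p), -(q : ℚ)] :=
      {1, (2 : ℚ)⁻¹ • (1 + ⟨0,0,1,0⟩), (2 : ℚ)⁻¹ • ((⟨0,1,0,0⟩ : ℍ[ℚ, -((c : ℚ) * p), -(q : ℚ)]) * (1 + ⟨0,0,1,0⟩)),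
        (q : ℚ)⁻¹ • (((r : ℚ) • 1 + (⟨0,1,0,0⟩ : ℍ[ℚ, -((c : ℚ) * p), -(q : ℚ)])) * ⟨0,0,1,0⟩)} with hS
  set N : Submodule ℤ ℍ[ℚ, -((c : ℚ) * p), -(q : ℚ)] := Submodule.span ℤ S with hN
  have h1 : (1 : ℍ[ℚ, -((c : ℚ) * p), -(q : ℚ)]) ∈ N :=
    Submodule.subset_span (Set.mem_insert _ _)
  have h2 : (2 : ℚ)⁻¹ • (1 + (⟨0,0,1,0⟩ : ℍ[ℚ, -((c : ℚ) * p), -(q : ℚ)])) ∈ N :=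
    Submodule.subset_span (Set.mem_insert_of_mem _ (Set.mem_insert _ _))
  have h3 : (2 : ℚ)⁻¹ • ((⟨0,1,0,0⟩ : ℍ[ℚ, -((c : ℚ) * p), -(q : ℚ)]) * (1 + ⟨0,0,1,0⟩)) ∈ N :=
    Submodule.subset_span (Set.mem_insert_of_mem _ (Set.mem_insert_of_mem _ (Set.mem_insert _ _)))
  have h4 : (q : ℚ)⁻¹ • (((r : ℚ) • 1 + (⟨0,1,0,0⟩ : ℍ[ℚ, -((c : ℚ) * p), -(q : ℚ)])) * ⟨0,0,1,0⟩) ∈ N :=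
    Submodule.subset_span (Set.mem_insert_of_mem _ (Set.mem_insert_of_mem _
      (Set.mem_insert_of_mem _ rfl)))
  have key : N * N ≤ N := by
    rw [hN, Submodule.span_mul_span, Submodule.span_le]
    rintro z hz
    rw [Set.mem_mul] at hz
    obtain ⟨x, hx, y, hy, rfl⟩ := hz
    simp only [hS, Set.mem_insert_iff, Set.mem_singleton_iff] at hx hy
    rcases hx with rfl | rfl | rfl | rfl <;> rcases hy with rfl | rfl | rfl | rfl
    · rw [one_mul]; exact h1
    · rw [one_mul]; exact h2
    · rw [one_mul]; exact h3
    · rw [one_mul]; exact h4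
    · rw [mul_one]; exact h2
    · rw [quatO_mul_22 _ _ t m r hq0 hq' hcp']
      exact add_mem (N.smul_mem _ h1) h2
    · rw [quatO_mul_23 _ _ t m r hq0 hq' hcp']
      exact add_mem (add_mem (add_mem (N.smul_mem _ h1) (N.smul_mem _ h2)) (N.smul_mem _ h3))
        (N.smul_mem _ h4)
    · rw [quatO_mul_24 _ _ t m r hq0 hq' hcp']
      exact add_mem (add_mem (add_mem (N.smul_mem _ h1) (N.smul_mem _ h2)) (N.smul_mem _ h3))
        (N.smul_mem _ h4)
    · rw [mul_one]; exact h3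
    · rw [quatO_mul_32 _ _ t m r hq0 hq' hcp']
      exact add_mem (add_mem (add_mem (N.smul_mem _ h1) (N.smul_mem _ h2)) (N.smul_mem _ h3))
        (N.smul_mem _ h4)
    · rw [quatO_mul_33 _ _ t m r hq0 hq' hcp']
      exact N.smul_mem _ h1
    · rw [quatO_mul_34 _ _ t m r hq0 hq' hcp']
      exact add_mem (add_mem (add_mem (N.smul_mem _ h1) (N.smul_mem _ h2)) (N.smul_mem _ h3))
        (N.smul_mem _ h4)
    · rw [mul_one]; exact h4
    · rw [quatO_mul_42 _ _ t m r hq0 hq' hcp']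
      exact add_mem (add_mem (N.smul_mem _ h2) (N.smul_mem _ h3)) (N.smul_mem _ h4)
    · rw [quatO_mul_43 _ _ t m r hq0 hq' hcp']
      exact add_mem (add_mem (add_mem (N.smul_mem _ h1) (N.smul_mem _ h2)) (N.smul_mem _ h3))
        (N.smul_mem _ h4)
    · rw [quatO_mul_44 _ _ t m r hq0 hq' hcp']
      exact N.smul_mem _ h1
  intro x hx y hy
  rw [hO] at hx hy ⊢
  exact key (Submodule.mul_mem_mul hx hy)
end

section
/- Let Q(x,y,z) = 2ax² + 2by² + 2cz² + 2uyz + 2vxz + 2wxy be an integral ternary quadratic form with discriminant N = 4abc + uvw − au² − bv² − cw², and let O = ℤ + ℤi + ℤj + ℤk be the even Clifford algebra with multiplication i² = ui − bc, j² = vj − ac, k² = wk − ab, jk = a(u−i), ki = b(v−j), ij = c(w−k). Then the discriminant of the order O equals N². -/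
theorem my_det_fin_four (A : Matrix (Fin 4) (Fin 4) ℚ) : A.det =
    A 0 0*A 1 1*A 2 2*A 3 3 - A 0 0*A 1 1*A 2 3*A 3 2 - A 0 0*A 1 2*A 2 1*A 3 3 + A 0 0*A 1 2*A 2 3*A 3 1 + A 0 0*A 1 3*A 2 1*A 3 2 - A 0 0*A 1 3*A 2 2*A 3 1 - A 0 1*A 1 0*A 2 2*A 3 3 + A 0 1*A 1 0*A 2 3*A 3 2 + A 0 1*A 1 2*A 2 0*A 3 3 - A 0 1*A 1 2*A 2 3*A 3 0 - A 0 1*A 1 3*A 2 0*A 3 2 + A 0 1*A 1 3*A 2 2*A 3 0 + A 0 2*A 1 0*A 2 1*A 3 3 - A 0 2*A 1 0*A 2 3*A 3 1 - A 0 2*A 1 1*A 2 0*A 3 3 + A 0 2*A 1 1*A 2 3*A 3 0 + A 0 2*A 1 3*A 2 0*A 3 1 - A 0 2*A 1 3*A 2 1*A 3 0 - A 0 3*A 1 0*A 2 1*A 3 2 + A 0 3*A 1 0*A 2 2*A 3 1 + A 0 3*A 1 1*A 2 0*A 3 2 - A 0 3*A 1 1*A 2 2*A 3 0 - A 0 3*A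 1 2*A 2 0*A 3 1 + A 0 3*A 1 2*A 2 1*A 3 0 := by
  rw [Matrix.det_succ_row_zero]
  simp only [Fin.sum_univ_succ, Fin.sum_univ_zero, Matrix.det_fin_three, Matrix.submatrix_apply]
  simp [Fin.succAbove, Fin.lt_def]
  ring


set_option maxHeartbeats 1000000 in
open Quaternion in
/-- The even Clifford order of a ternary quadratic form of discriminant `N` has
discriminant `N²`: the determinant of the reduced-trace Gram matrix of the basis
`1, i, j, k` equals `N²`. -/
theorem stmt_13 (c₁ c₂ : ℚ) (a b c u v w N : ℤ)
    (hN : N = 4 * a * b * c + u * v * w - a * u ^ 2 - b * v ^ 2 - c * w ^ 2)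
    (i j k : ℍ[ℚ, c₁, c₂])
    (hi2 : i * i = (u : ℚ) • i - ((b : ℚ) * c) • (1 : ℍ[ℚ, c₁, c₂]))
    (hj2 : j * j = (v : ℚ) • j - ((a : ℚ) * c) • (1 : ℍ[ℚ, c₁, c₂]))
    (hk2 : k * k = (w : ℚ) • k - ((a : ℚ) * b) • (1 : ℍ[ℚ, c₁, c₂]))
    (hjk : j * k = (a : ℚ) • ((u : ℚ) • (1 : ℍ[ℚ, c₁, c₂]) - i))
    (hki : k * i = (b : ℚ) • ((v : ℚ) • (1 : ℍ[ℚ, c₁, c₂]) - j))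
    (hij : i * j = (c : ℚ) • ((w : ℚ) • (1 : ℍ[ℚ, c₁, c₂]) - k))
    (hsi : star i = (u : ℚ) • (1 : ℍ[ℚ, c₁, c₂]) - i)
    (hsj : star j = (v : ℚ) • (1 : ℍ[ℚ, c₁, c₂]) - j)
    (hsk : star k = (w : ℚ) • (1 : ℍ[ℚ, c₁, c₂]) - k) :
    (Matrix.of fun s t : Fin 4 =>
        2 * ((![1, i, j, k] s) * star (![1, i, j, k] t)).re).det = (N : ℚ) ^ 2 := by
  have hmul : ∀ (x y : ℍ[ℚ, c₁, c₂]) (t : ℚ),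
      (x * (t • (1 : ℍ[ℚ, c₁, c₂]) - y)).re = t * x.re - (x * y).re := by
    intro x y t; simp [QuaternionAlgebra.re_mul]; ring
  have hsym : ∀ x y : ℍ[ℚ, c₁, c₂], (x * y).re = (y * x).re := by
    intro x y; simp [QuaternionAlgebra.re_mul]; ring
  have hir : i.re = (u : ℚ) / 2 := by
    have h := congrArg QuaternionAlgebra.re hsi; simp at h; linarith
  have hjr : j.re = (v : ℚ) / 2 := by
    have h := congrArg QuaternionAlgebra.re hsj; simp at h; linarith
  have hkr : k.re = (w : ℚ) / 2 := by
    have h := congrArg QuaternionAlgebra.re hsk; simp at h; linarith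
  have hre : ∀ (x : ℍ[ℚ, c₁, c₂]) (s t : ℚ),
      (s • (t • (1 : ℍ[ℚ, c₁, c₂]) - x)).re = s * (t - x.re) := by
    intro x s t; simp
  have hre2 : ∀ (x : ℍ[ℚ, c₁, c₂]) (s t : ℚ),
      (s • x - t • (1 : ℍ[ℚ, c₁, c₂])).re = s * x.re - t := by
    intro x s t; simp
  have pii : (i * i).re = (u : ℚ) * (u / 2) - b * c := by
    have h := congrArg QuaternionAlgebra.re hi2; rw [hre2, hir] at h; linear_combination h
  have pjj : (j * j).re = (v : ℚ) * (v / 2) - a * c := by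
    have h := congrArg QuaternionAlgebra.re hj2; rw [hre2, hjr] at h; linear_combination h
  have pkk : (k * k).re = (w : ℚ) * (w / 2) - a * b := by
    have h := congrArg QuaternionAlgebra.re hk2; rw [hre2, hkr] at h; linear_combination h
  have pjk : (j * k).re = (a : ℚ) * (u / 2) := by
    have h := congrArg QuaternionAlgebra.re hjk; rw [hre, hir] at h; linear_combination h
  have pki : (k * i).re = (b : ℚ) * (v / 2) := by
    have h := congrArg QuaternionAlgebra.re hki; rw [hre, hjr] at h; linear_combination h
  have pij : (i * j).re = (c : ℚ) * (w / 2) := by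
    have h := congrArg QuaternionAlgebra.re hij; rw [hre, hkr] at h; linear_combination h
  have g0i : (star i).re = (u : ℚ) / 2 := by rw [hsi]; simp; linarith
  have g0j : (star j).re = (v : ℚ) / 2 := by rw [hsj]; simp; linarith
  have g0k : (star k).re = (w : ℚ) / 2 := by rw [hsk]; simp; linarith
  have gii : (i * star i).re = (b : ℚ) * c := by
    rw [hsi, hmul, pii, hir]; ring
  have gjj : (j * star j).re = (a : ℚ) * c := by
    rw [hsj, hmul, pjj, hjr]; ring
  have gkk : (k * star k).re = (a : ℚ) * b := by
    rw [hsk, hmul, pkk, hkr]; ring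
  have gij : (i * star j).re = (u : ℚ) * v / 2 - c * w / 2 := by
    rw [hsj, hmul, pij, hir]; ring
  have gji : (j * star i).re = (u : ℚ) * v / 2 - c * w / 2 := by
    rw [hsi, hmul, hsym j i, pij, hjr]; ring
  have gik : (i * star k).re = (u : ℚ) * w / 2 - b * v / 2 := by
    rw [hsk, hmul, hsym i k, pki, hir]; ring
  have gki : (k * star i).re = (u : ℚ) * w / 2 - b * v / 2 := by
    rw [hsi, hmul, pki, hkr]; ring
  have gjk : (j * star k).re = (v : ℚ) * w / 2 - a * u / 2 := by
    rw [hsk, hmul, pjk, hjr]; ring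
  have gkj : (k * star j).re = (v : ℚ) * w / 2 - a * u / 2 := by
    rw [hsj, hmul, hsym k j, pjk, hkr]; ring
  subst hN
  rw [my_det_fin_four]
  simp only [Matrix.of_apply, Matrix.cons_val_zero, Matrix.cons_val_one, Matrix.head_cons,
    Matrix.cons_val_two, Matrix.tail_cons, Matrix.cons_val_three,
    star_one, one_mul, mul_one, QuaternionAlgebra.re_one,
    g0i, g0j, g0k, hir, hjr, hkr, gii, gjj, gkk, gij, gji, gik, gki, gjk, gkj]
  push_cast
  ring
end
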